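/- (Corollary 1: noise tolerance under simple non-uniform label noise.) Suppose c1 ≤ Σ_{i=1}^{k} ψ(g(x), i) ≤ c2 holds for μ-almost every x and for g ∈ {f, f*}, that Δ ≤ 0 is a real number with ψ(f*(x), y) − ψ(f(x), y) ≤ Δ for μ-almost every (x, y), that c2 − c1 − kΔ > 0, and that the noise-rate function satisfies 0 ≤ η(x) < ((1−k)·Δ)/(c2 − c1 − kΔ) for μ-almost every x. Then R^η_ψ(f*) ≤ R^η_ψ(f), i.e., f* also minimizes the risk under simple non-uniform label noise relative to f. -/

import Mathlib

open MeasureTheory Finset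

/-- The ψ-risk under simple non-uniform label noise with noise-rate function η. -/
noncomputable def noisyRiskFn {X : Type*} [MeasurableSpace X] {k : ℕ}
    (μ : Measure (X × Fin k)) (ψ : (Fin k → ℝ) → Fin k → ℝ) (g : X → Fin k → ℝ)
    (η : X → ℝ) : ℝ :=
  ∫ p, ((1 - η p.1) * ψ (g p.1) p.2
      + (η p.1 / ((k : ℝ) - 1)) * ∑ i ∈ Finset.univ.erase p.2, ψ (g p.1) i) ∂μ

lemma int_diag {X : Type*} [MeasurableSpace X] {k : ℕ}
    (μ : Measure (X × Fin k)) (ψ : (Fin k → ℝ) → Fin k → ℝ) (g : X → Fin k → ℝ)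
    (h : ∀ i : Fin k, Integrable (fun p : X × Fin k => ψ (g p.1) i) μ) :
    Integrable (fun p : X × Fin k => ψ (g p.1) p.2) μ := by
  have heq : (fun p : X × Fin k => ψ (g p.1) p.2)
      = fun p => ∑ i : Fin k,
          Set.indicator {q : X × Fin k | q.2 = i} (fun q => ψ (g q.1) i) p := by
    funext p
    rw [Finset.sum_eq_single p.2]
    · simp [Set.indicator_of_mem, Set.mem_setOf_eq]
    · intro i _ hi
      apply Set.indicator_of_notMem
      simp [Set.mem_setOf_eq]
      exact fun h => (hi h.symm).elim
    · simp
  rw [heq]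
  apply integrable_finset_sum
  intro i _
  exact (h i).indicator (measurable_snd (measurableSet_singleton i))

lemma int_noisy {X : Type*} [MeasurableSpace X] {k : ℕ} (hk : 2 ≤ k)
    (μ : Measure (X × Fin k)) (ψ : (Fin k → ℝ) → Fin k → ℝ) (g : X → Fin k → ℝ)
    (h : ∀ i : Fin k, Integrable (fun p : X × Fin k => ψ (g p.1) i) μ)
    (η : X → ℝ) (hmeas : Measurable η) (hη : ∀ x, 0 ≤ η x ∧ η x < 1) :
    Integrable (fun p : X × Fin k => (1 - η p.1) * ψ (g p.1) p.2
      + (η p.1 / ((k : ℝ) - 1)) * ∑ i ∈ Finset.univ.erase p.2, ψ (g p.1) i) μ := by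
  have hK1 : (1 : ℝ) ≤ (k : ℝ) - 1 := by
    have : (2 : ℝ) ≤ (k : ℝ) := by exact_mod_cast hk
    linarith
  have hA : Integrable (fun p : X × Fin k => ψ (g p.1) p.2) μ := int_diag μ ψ g h
  have hS : Integrable (fun p : X × Fin k => ∑ i : Fin k, ψ (g p.1) i) μ :=
    integrable_finset_sum _ fun i _ => h i
  have hB : Integrable
      (fun p : X × Fin k => ∑ i ∈ Finset.univ.erase p.2, ψ (g p.1) i) μ := by
    have heq : (fun p : X × Fin k => ∑ i ∈ Finset.univ.erase p.2, ψ (g p.1) i)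
        = fun p => (∑ i : Fin k, ψ (g p.1) i) - ψ (g p.1) p.2 := by
      funext p
      exact Finset.sum_erase_eq_sub (Finset.mem_univ p.2)
    rw [heq]
    exact hS.sub hA
  have hm1 : AEStronglyMeasurable (fun p : X × Fin k => 1 - η p.1) μ :=
    ((measurable_const.sub (hmeas.comp measurable_fst))).aestronglyMeasurable
  have hm2 : AEStronglyMeasurable (fun p : X × Fin k => η p.1 / ((k : ℝ) - 1)) μ :=
    (((hmeas.comp measurable_fst)).div_const _).aestronglyMeasurable
  have h1 : Integrable (fun p : X × Fin k => (1 - η p.1) * ψ (g p.1) p.2) μ := by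
    apply hA.bdd_mul (c := 1) hm1
    exact Filter.Eventually.of_forall fun p => by
      have := hη p.1
      rw [Real.norm_eq_abs, abs_le]; constructor <;> linarith [this.1, this.2]
  have h2 : Integrable (fun p : X × Fin k =>
      (η p.1 / ((k : ℝ) - 1)) * ∑ i ∈ Finset.univ.erase p.2, ψ (g p.1) i) μ := by
    apply hB.bdd_mul (c := 1) hm2
    refine Filter.Eventually.of_forall fun p => ?_
    have h0 := hη p.1
    have hd : 0 ≤ η p.1 / ((k : ℝ) - 1) := div_nonneg h0.1 (by linarith)
    rw [Real.norm_eq_abs, abs_of_nonneg hd]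
    rw [div_le_one (by linarith)]
    linarith [h0.2]
  exact h1.add h2

/-- Corollary 1: noise tolerance under simple non-uniform label
noise. If loss sums are a.e. in [c1, c2], the pointwise loss gap is a.e. at most
Δ ≤ 0, c2 − c1 − kΔ > 0, and a.e. 0 ≤ η(x) < (1−k)Δ/(c2 − c1 − kΔ), then
R^η_ψ(f*) ≤ R^η_ψ(f). -/
theorem noise_tolerance_nonuniform {X : Type*} [MeasurableSpace X] {k : ℕ} (hk : 2 ≤ k)
    (μ : Measure (X × Fin k)) [IsProbabilityMeasure μ]
    (f fstar : X → Fin k → ℝ) (ψ : (Fin k → ℝ) → Fin k → ℝ)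
    (hintf : ∀ i : Fin k, Integrable (fun p : X × Fin k => ψ (f p.1) i) μ)
    (hintfstar : ∀ i : Fin k, Integrable (fun p : X × Fin k => ψ (fstar p.1) i) μ)
    (η : X → ℝ) (hmeas : Measurable η) (hη : ∀ x, 0 ≤ η x ∧ η x < 1)
    (hintη : Integrable (fun p : X × Fin k => η p.1) μ)
    (c1 c2 : ℝ)
    (hboundf : ∀ᵐ p ∂μ, c1 ≤ ∑ i, ψ (f p.1) i ∧ ∑ i, ψ (f p.1) i ≤ c2)
    (hboundfstar : ∀ᵐ p ∂μ, c1 ≤ ∑ i, ψ (fstar p.1) i ∧ ∑ i, ψ (fstar p.1) i ≤ c2)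
    (Δ : ℝ) (hΔneg : Δ ≤ 0)
    (hΔ : ∀ᵐ p ∂μ, ψ (fstar p.1) p.2 - ψ (f p.1) p.2 ≤ Δ)
    (hdenom : 0 < c2 - c1 - (k : ℝ) * Δ)
    (hηrange : ∀ᵐ p ∂μ, 0 ≤ η p.1 ∧
        η p.1 < ((1 - (k : ℝ)) * Δ) / (c2 - c1 - (k : ℝ) * Δ)) :
    noisyRiskFn μ ψ fstar η ≤ noisyRiskFn μ ψ f η := by
  have hK2 : (2 : ℝ) ≤ (k : ℝ) := by exact_mod_cast hk
  have hK1 : (0 : ℝ) < (k : ℝ) - 1 := by linarith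
  -- c1 ≤ c2
  haveI : Filter.NeBot (ae μ) := ae_neBot.2 (IsProbabilityMeasure.ne_zero μ)
  obtain ⟨p₀, hp₀⟩ := hboundf.exists
  have hc12 : c1 ≤ c2 := le_trans hp₀.1 hp₀.2
  unfold noisyRiskFn
  apply integral_mono_ae
    (int_noisy hk μ ψ fstar hintfstar η hmeas hη)
    (int_noisy hk μ ψ f hintf η hmeas hη)
  filter_upwards [hboundf, hboundfstar, hΔ, hηrange] with p hbf hbfs hpΔ hpη
  set t := η p.1 / ((k : ℝ) - 1) with hT
  have htη : η p.1 = t * ((k : ℝ) - 1) := by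
    rw [hT, div_mul_cancel₀ _ (ne_of_gt hK1)]
  have ht0 : 0 ≤ t := div_nonneg hpη.1 (le_of_lt hK1)
  -- from the range hypothesis: t * (c2 - c1 - KΔ) + Δ < 0
  have hlt : η p.1 * (c2 - c1 - (k : ℝ) * Δ) < (1 - (k : ℝ)) * Δ :=
    (lt_div_iff₀ hdenom).mp hpη.2
  have h3 : t * (c2 - c1 - (k : ℝ) * Δ) + Δ < 0 := by
    have := mul_pos hK1 hdenom
    rw [htη] at hlt
    nlinarith
  -- coefficient nonnegativity: 1 - t*k ≥ 0
  have hcoef : 0 ≤ 1 - t * (k : ℝ) := by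
    nlinarith [mul_le_mul_of_nonneg_left (le_of_lt h3) (by positivity : (0:ℝ) ≤ (k : ℝ)),
      hdenom, hc12, ht0]
  rw [Finset.sum_erase_eq_sub (Finset.mem_univ p.2),
    Finset.sum_erase_eq_sub (Finset.mem_univ p.2), htη]
  nlinarith [mul_nonneg hcoef (by linarith [hpΔ] :
      (0:ℝ) ≤ Δ - (ψ (fstar p.1) p.2 - ψ (f p.1) p.2)),
    mul_nonneg ht0 (by linarith [hbf.1, hbfs.2] :
      (0:ℝ) ≤ (c2 - c1) - ((∑ i, ψ (fstar p.1) i) - ∑ i, ψ (f p.1) i)),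
    h3]
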